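/- Under the assumptions λ₁ ≥ λ₂ ≥ 0, α ∈ [0,1/2], |γ| ≤ 1, for any unit vector (u,v) and the corresponding tensor entries a = λ₁u²+λ₂v², b = (λ₁−λ₂)uv, c = λ₂u²+λ₁v², δ = α(a+c)+γ(1−2α)sgn(b)b, the quantity m₋ := (a−δ) + (δ−b) + (c−δ) also satisfies max_{u,v} m₋ = (1−α)(λ₁+λ₂) + (1/2)(1−γ(1−2α))(λ₁−λ₂), attained at u = −v = 1/√2. -/
import Mathlib

lemma sign_mul_self_eq_abs (b : ℝ) : Real.sign b * b = |b| := by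
  rcases lt_trichotomy b 0 with h | h | h
  · simp [Real.sign_of_neg h, abs_of_neg h]
  · simp [h]
  · simp [Real.sign_of_pos h, abs_of_pos h]

/-- The quantity m₋ = (a−δ) + (δ−b) + (c−δ) as a function of the eigenvector entries. -/
noncomputable def mMinus (l1 l2 α γ u v : ℝ) : ℝ :=
  let a := l1 * u ^ 2 + l2 * v ^ 2
  let b := (l1 - l2) * (u * v)
  let c := l2 * u ^ 2 + l1 * v ^ 2
  let δ := α * (a + c) + γ * (1 - 2 * α) * Real.sign b * b
  (a - δ) + (δ - b) + (c - δ)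

theorem max_mMinus (l1 l2 α γ : ℝ)
    (h12 : l2 ≤ l1) (h2 : 0 ≤ l2)
    (hα : α ∈ Set.Icc (0 : ℝ) (1 / 2)) (hγ : |γ| ≤ 1) :
    IsGreatest {m : ℝ | ∃ u v : ℝ, u ^ 2 + v ^ 2 = 1 ∧ m = mMinus l1 l2 α γ u v}
      ((1 - α) * (l1 + l2) + (1 / 2) * (1 - γ * (1 - 2 * α)) * (l1 - l2)) ∧
    mMinus l1 l2 α γ (1 / Real.sqrt 2) (-(1 / Real.sqrt 2)) =
      (1 - α) * (l1 + l2) + (1 / 2) * (1 - γ * (1 - 2 * α)) * (l1 - l2) := by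
  obtain ⟨hα0, hα1⟩ := hα
  rw [abs_le] at hγ
  have hk1 : γ * (1 - 2 * α) ≤ 1 := by nlinarith [hγ.1, hγ.2]
  have hk2 : -1 ≤ γ * (1 - 2 * α) := by nlinarith [hγ.1, hγ.2]
  have key : ∀ u v : ℝ, u ^ 2 + v ^ 2 = 1 → mMinus l1 l2 α γ u v
      = (1 - α) * (l1 + l2) - (l1 - l2) * (u * v)
        - γ * (1 - 2 * α) * |(l1 - l2) * (u * v)| := by
    intro u v huv
    simp only [mMinus]
    rw [mul_assoc (γ * (1 - 2 * α)), sign_mul_self_eq_abs]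
    linear_combination (1 - α) * (l1 + l2) * huv
  have hwit : mMinus l1 l2 α γ (1 / Real.sqrt 2) (-(1 / Real.sqrt 2)) =
      (1 - α) * (l1 + l2) + (1 / 2) * (1 - γ * (1 - 2 * α)) * (l1 - l2) := by
    have hs : (1 / Real.sqrt 2) * (1 / Real.sqrt 2) = 1 / 2 := by
      rw [div_mul_div_comm, Real.mul_self_sqrt (by norm_num)]; norm_num
    have huv : (1 / Real.sqrt 2) ^ 2 + (-(1 / Real.sqrt 2)) ^ 2 = 1 := by
      rw [neg_pow, sq, hs]; ring
    rw [key _ _ huv]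
    have hprod : (1 / Real.sqrt 2) * (-(1 / Real.sqrt 2)) = -(1/2) := by
      rw [mul_neg, hs]
    rw [hprod]
    rw [show (l1 - l2) * (-(1/2)) = -((l1 - l2)/2) by ring, abs_neg,
      abs_of_nonneg (by linarith)]
    ring
  refine ⟨⟨⟨_, _, ?_, hwit.symm⟩, ?_⟩, hwit⟩
  · rw [neg_pow, sq, div_mul_div_comm, Real.mul_self_sqrt (by norm_num)]; norm_num
  · rintro m ⟨u, v, huv, rfl⟩
    rw [key u v huv]
    set b := (l1 - l2) * (u * v) with hb
    have habs : |b| ≤ (l1 - l2) / 2 := by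
      rw [abs_le]
      constructor <;> nlinarith [sq_nonneg (u - v), sq_nonneg (u + v)]
    nlinarith [neg_abs_le b, mul_nonneg (by linarith : (0:ℝ) ≤ 1 - γ * (1 - 2 * α))
      (by linarith : 0 ≤ (l1 - l2) / 2 - |b|)]
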